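/- Suppose that for every real x ≥ 2010759.9 the open interval (x, x(1 + 1/16597)) contains a prime number. Then for every prime p ≥ 670294, there exists a prime q with 3p(1 − 1/16598) < q < 3p; consequently, if S is the additive submonoid of ℕ generated by all primes ≥ p and u is its largest atom, then u/p > 3 − 3/16598. -/

import Mathlib

open Real

/-- The additive submonoid of ℕ generated by all primes `q ≥ p`. -/
def Sgen (p : ℕ) : AddSubmonoid ℕ := AddSubmonoid.closure {q : ℕ | q.Prime ∧ p ≤ q}

/-- `a` is an atom of `Sgen p`: nonzero, in `Sgen p`, and not a sum of two nonzero elements. -/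
def IsAtomOf (p a : ℕ) : Prop :=
  a ∈ Sgen p ∧ a ≠ 0 ∧
    ¬ ∃ b c : ℕ, b ∈ Sgen p ∧ c ∈ Sgen p ∧ b ≠ 0 ∧ c ≠ 0 ∧ a = b + c

lemma Sgen_struct (p : ℕ) (hp2 : 2 < p) : ∀ n ∈ Sgen p, ∃ k : ℕ, k * p ≤ n ∧ n % 2 = k % 2 ∧ (n = 0 → k = 0) ∧ (k = 0 → n = 0) := by
  intro n hn
  induction hn using AddSubmonoid.closure_induction with
  | mem x hx =>
    obtain ⟨hxp, hpx⟩ := hx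
    have hodd : Odd x := hxp.odd_of_ne_two (by omega)
    obtain ⟨m, hm⟩ := hodd
    exact ⟨1, by omega, by omega, by omega, by omega⟩
  | zero => exact ⟨0, by omega, by omega, fun _ => rfl, fun _ => rfl⟩
  | add a b _ _ ha hb =>
    obtain ⟨ka, h1, h2, h3, h4⟩ := ha
    obtain ⟨kb, h5, h6, h7, h8⟩ := hb
    exact ⟨ka + kb, by nlinarith, by omega, by omega, by omega⟩

theorem stmt10
    (hSchoenfeld : ∀ x : ℝ, 2010759.9 ≤ x →
      ∃ q : ℕ, q.Prime ∧ x < q ∧ (q : ℝ) < x * (1 + 1 / 16597)) :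
    ∀ p : ℕ, p.Prime → 670294 ≤ p →
      (∃ q : ℕ, q.Prime ∧ 3 * (p : ℝ) * (1 - 1 / 16598) < q ∧ (q : ℝ) < 3 * p) ∧
      ∀ u : ℕ, IsGreatest {a : ℕ | IsAtomOf p a} u →
        (u : ℝ) / p > 3 - 3 / 16598 := by
  intro p hp hp'
  have hpR : (670294 : ℝ) ≤ (p : ℝ) := by exact_mod_cast hp'
  have hx : (2010759.9 : ℝ) ≤ 3 * (p : ℝ) * (1 - 1 / 16598) := by nlinarith
  obtain ⟨q, hq, hq1, hq2⟩ := hSchoenfeld _ hx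
  have hq3 : (q : ℝ) < 3 * p := by
    calc (q : ℝ) < 3 * (p : ℝ) * (1 - 1 / 16598) * (1 + 1 / 16597) := hq2
    _ = 3 * p := by ring
  refine ⟨⟨q, hq, hq1, hq3⟩, ?_⟩
  intro u hu
  -- q is an atom
  have hpq : p < q := by
    have : (p : ℝ) < q := by nlinarith
    exact_mod_cast this
  have hqmem : q ∈ Sgen p := AddSubmonoid.subset_closure ⟨hq, hpq.le⟩
  have hq3' : q < 3 * p := by exact_mod_cast hq3
  have hatom : IsAtomOf p q := by
    refine ⟨hqmem, hq.ne_zero, ?_⟩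
    rintro ⟨b, c, hb, hc, hb0, hc0, hqbc⟩
    obtain ⟨kb, hb1, hb2, hb3, hb4⟩ := Sgen_struct p (by omega) b hb
    obtain ⟨kc, hc1, hc2, hc3, hc4⟩ := Sgen_struct p (by omega) c hc
    have hkb : kb = 1 := by nlinarith [Nat.one_le_iff_ne_zero.2 (fun h => hb0 (hb4 h)), Nat.one_le_iff_ne_zero.2 (fun h => hc0 (hc4 h))]
    have hkc : kc = 1 := by nlinarith [Nat.one_le_iff_ne_zero.2 (fun h => hb0 (hb4 h)), Nat.one_le_iff_ne_zero.2 (fun h => hc0 (hc4 h))]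
    -- q is even and prime, so q = 2, contradiction
    have : q % 2 = 0 := by omega
    have h2 : (2 : ℕ) ∣ q := by omega
    have := (Nat.Prime.eq_one_or_self_of_dvd hq 2 h2).resolve_left (by omega)
    omega
  have huq : q ≤ u := hu.2 hatom
  have hppos : (0 : ℝ) < p := by positivity
  have huR : 3 * (p : ℝ) * (1 - 1 / 16598) < u := lt_of_lt_of_le hq1 (by exact_mod_cast huq)
  rw [gt_iff_lt, lt_div_iff₀ hppos]
  nlinarith
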